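/- Let G be a graph on {1,…,n} that has a perfect matching, and let w be an assignment of positive integer weights to the edges such that G has a unique perfect matching of minimum total weight. Let B_{G,w} be the integer matrix obtained from the Tutte matrix of G by substituting x_{ij} := 2^{w(i,j)}. Then det(B_{G,w}) ≠ 0. -/

import Mathlib

/-- A matching, given as a finset of ordered edge pairs `(i,j)` with `i < j`. -/
def IsMatchingF {n : ℕ} (G : SimpleGraph (Fin n)) (s : Finset (Fin n × Fin n)) : Prop :=
  (∀ p ∈ s, p.1 < p.2 ∧ G.Adj p.1 p.2) ∧
    ∀ p ∈ s, ∀ q ∈ s, p ≠ q → p.1 ≠ q.1 ∧ p.1 ≠ q.2 ∧ p.2 ≠ q.1 ∧ p.2 ≠ q.2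

/-- A perfect matching: a matching covering every vertex. -/
def IsPerfectMatchingF {n : ℕ} (G : SimpleGraph (Fin n)) (s : Finset (Fin n × Fin n)) : Prop :=
  IsMatchingF G s ∧ ∀ v : Fin n, ∃ p ∈ s, v = p.1 ∨ v = p.2

open Equiv Equiv.Perm Finset

namespace MVV
variable {n : ℕ}

/-- Reverse the cycle of `σ` through `x`. -/
def rev (σ : Equiv.Perm (Fin n)) (x : Fin n) : Equiv.Perm (Fin n) :=
  σ * (σ.cycleOf x)⁻¹ * (σ.cycleOf x)⁻¹

lemma mem_supp_cycle {σ : Equiv.Perm (Fin n)} {x : Fin n} (hx : x ∈ σ.support) :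
    x ∈ (σ.cycleOf x).support := by
  rw [Equiv.Perm.mem_support_cycleOf_iff]
  exact ⟨Equiv.Perm.SameCycle.refl _ _, hx⟩

lemma cycle_apply_of_mem {σ : Equiv.Perm (Fin n)} {x j : Fin n}
    (hj : j ∈ (σ.cycleOf x).support) : (σ.cycleOf x) j = σ j := by
  rw [Equiv.Perm.mem_support_cycleOf_iff] at hj
  exact Equiv.Perm.SameCycle.cycleOf_apply hj.1

lemma rev_apply_of_mem {σ : Equiv.Perm (Fin n)} {x j : Fin n}
    (hj : j ∈ (σ.cycleOf x).support) : rev σ x j = (σ.cycleOf x)⁻¹ j := by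
  have h1 : (σ.cycleOf x)⁻¹ j ∈ (σ.cycleOf x).support := by
    rwa [← Equiv.Perm.support_inv, Equiv.Perm.apply_mem_support, Equiv.Perm.support_inv]
  have h2 : (σ.cycleOf x)⁻¹ ((σ.cycleOf x)⁻¹ j) ∈ (σ.cycleOf x).support := by
    rwa [← Equiv.Perm.support_inv, Equiv.Perm.apply_mem_support, Equiv.Perm.support_inv]
  show σ ((σ.cycleOf x)⁻¹ ((σ.cycleOf x)⁻¹ j)) = _
  rw [← cycle_apply_of_mem h2]
  simp

lemma rev_apply_of_not_mem {σ : Equiv.Perm (Fin n)} {x j : Fin n}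
    (hj : j ∉ (σ.cycleOf x).support) : rev σ x j = σ j := by
  have h1 : (σ.cycleOf x)⁻¹ j = j := by
    rw [← Equiv.Perm.notMem_support, Equiv.Perm.support_inv]; exact hj
  show σ ((σ.cycleOf x)⁻¹ ((σ.cycleOf x)⁻¹ j)) = _
  rw [h1, h1]

lemma cycleOf_rev {σ : Equiv.Perm (Fin n)} {x : Fin n} (hx : x ∈ σ.support) (j : Fin n) :
    (rev σ x).cycleOf j =
      if j ∈ (σ.cycleOf x).support then (σ.cycleOf x)⁻¹ else σ.cycleOf j := by
  have hc : σ.cycleOf x ∈ σ.cycleFactorsFinset :=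
    Equiv.Perm.cycleOf_mem_cycleFactorsFinset_iff.mpr hx
  have hcyc : (σ.cycleOf x).IsCycle := (Equiv.Perm.mem_cycleFactorsFinset_iff.mp hc).1
  have hmem : (σ.cycleOf x)⁻¹ ∈ (rev σ x).cycleFactorsFinset := by
    rw [Equiv.Perm.mem_cycleFactorsFinset_iff]
    refine ⟨hcyc.inv, fun a ha => ?_⟩
    rw [Equiv.Perm.support_inv] at ha
    rw [rev_apply_of_mem ha]
  split_ifs with hj
  · exact (Equiv.Perm.cycle_is_cycleOf (by rwa [Equiv.Perm.support_inv]) hmem).symm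
  · by_cases hjs : j ∈ σ.support
    · have hd : σ.cycleOf j ∈ (rev σ x).cycleFactorsFinset := by
        rw [Equiv.Perm.mem_cycleFactorsFinset_iff]
        refine ⟨Equiv.Perm.isCycle_cycleOf σ (Equiv.Perm.mem_support.mp hjs), fun a ha => ?_⟩
        have hanc : a ∉ (σ.cycleOf x).support := by
          intro hac
          rw [Equiv.Perm.mem_support_cycleOf_iff] at ha hac
          exact hj (Equiv.Perm.mem_support_cycleOf_iff.mpr ⟨hac.1.trans ha.1.symm, hx⟩)
        rw [rev_apply_of_not_mem hanc, cycle_apply_of_mem ha]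
      exact (Equiv.Perm.cycle_is_cycleOf (mem_supp_cycle hjs) hd).symm
    · have h1 : σ j = j := Equiv.Perm.notMem_support.mp hjs
      have h2 : rev σ x j = j := by rw [rev_apply_of_not_mem hj, h1]
      rw [(Equiv.Perm.cycleOf_eq_one_iff _).mpr h2, (Equiv.Perm.cycleOf_eq_one_iff _).mpr h1]

lemma rev_rev {σ : Equiv.Perm (Fin n)} {x : Fin n} (hx : x ∈ σ.support) :
    rev (rev σ x) x = σ := by
  have hxc : x ∈ (σ.cycleOf x).support := mem_supp_cycle hx
  have h1 : (rev σ x).cycleOf x = (σ.cycleOf x)⁻¹ := by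
    rw [cycleOf_rev hx x, if_pos hxc]
  rw [show rev (rev σ x) x = (rev σ x) * ((rev σ x).cycleOf x)⁻¹ * ((rev σ x).cycleOf x)⁻¹ from rfl,
    h1]
  unfold rev
  group

lemma rev_ne {σ : Equiv.Perm (Fin n)} {x : Fin n}
    (hodd : Odd (σ.cycleOf x).support.card) : rev σ x ≠ σ := by
  have hx : x ∈ σ.support := Equiv.Perm.mem_support.mpr
    (Equiv.Perm.support_cycleOf_nonempty.mp (Finset.card_pos.mp hodd.pos))
  have hxc : x ∈ (σ.cycleOf x).support := mem_supp_cycle hx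
  have hcyc : (σ.cycleOf x).IsCycle := Equiv.Perm.isCycle_cycleOf σ (Equiv.Perm.mem_support.mp hx)
  intro h
  have h1 : (σ.cycleOf x)⁻¹ x = σ x := by rw [← rev_apply_of_mem hxc, h]
  have h2 : (σ.cycleOf x) x = σ x := cycle_apply_of_mem hxc
  have hne : (σ.cycleOf x) x ≠ x := Equiv.Perm.mem_support.mp hxc
  have h3 : ((σ.cycleOf x) ^ 2) x = x := by
    have hcc : (σ.cycleOf x)⁻¹ x = (σ.cycleOf x) x := h1.trans h2.symm
    have : (σ.cycleOf x) ((σ.cycleOf x)⁻¹ x) = x := by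
      rw [← Equiv.Perm.mul_apply, mul_inv_cancel, Equiv.Perm.one_apply]
    rw [hcc] at this
    rw [pow_two, Equiv.Perm.mul_apply, this]
  have h4 : (σ.cycleOf x) ^ 2 = 1 := (hcyc.pow_eq_one_iff' hne).2 h3
  have h5 : orderOf (σ.cycleOf x) ∣ 2 := orderOf_dvd_of_pow_eq_one h4
  rw [hcyc.orderOf] at h5
  rcases (Nat.dvd_prime Nat.prime_two).1 h5 with h6 | h6
  · have := hcyc.two_le_card_support
    omega
  · rw [h6] at hodd
    exact (by norm_num : ¬ Odd 2) hodd

lemma sign_rev (σ : Equiv.Perm (Fin n)) (x : Fin n) :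
    Equiv.Perm.sign (rev σ x) = Equiv.Perm.sign σ := by
  unfold rev
  rw [map_mul, map_mul, mul_assoc]
  have : Equiv.Perm.sign (σ.cycleOf x)⁻¹ * Equiv.Perm.sign (σ.cycleOf x)⁻¹ = 1 :=
    Int.units_mul_self _
  rw [this, mul_one]

lemma rev_fpf {σ : Equiv.Perm (Fin n)} {x : Fin n} (hfpf : ∀ i, σ i ≠ i) (j : Fin n) :
    rev σ x j ≠ j := by
  by_cases hj : j ∈ (σ.cycleOf x).support
  · rw [rev_apply_of_mem hj]
    have : j ∈ (σ.cycleOf x)⁻¹.support := by rwa [Equiv.Perm.support_inv]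
    exact Equiv.Perm.mem_support.mp this
  · rw [rev_apply_of_not_mem hj]; exact hfpf j

lemma odd_cycle_rev_iff {σ : Equiv.Perm (Fin n)} {x : Fin n} (hx : x ∈ σ.support) (j : Fin n) :
    Odd (((rev σ x).cycleOf j).support.card) ↔ Odd ((σ.cycleOf j).support.card) := by
  rw [cycleOf_rev hx j]
  split_ifs with hj
  · have hsc : σ.cycleOf j = σ.cycleOf x :=
      ((Equiv.Perm.mem_support_cycleOf_iff.mp hj).1.symm).cycleOf_eq
    rw [hsc, Equiv.Perm.support_inv]
  · rfl

lemma prod_rev {σ : Equiv.Perm (Fin n)} {x : Fin n} (B : Matrix (Fin n) (Fin n) ℤ)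
    (hskew : ∀ i j, B j i = - B i j) (hodd : Odd (σ.cycleOf x).support.card) :
    ∏ i, B (rev σ x i) i = - ∏ i, B (σ i) i := by
  set c := σ.cycleOf x with hc
  have split1 : ∏ i, B (rev σ x i) i =
      (∏ i ∈ c.support, B (rev σ x i) i) * ∏ i ∈ c.supportᶜ, B (rev σ x i) i :=
    (Finset.prod_mul_prod_compl _ _).symm
  have split2 : ∏ i, B (σ i) i =
      (∏ i ∈ c.support, B (σ i) i) * ∏ i ∈ c.supportᶜ, B (σ i) i :=
    (Finset.prod_mul_prod_compl _ _).symm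
  have hcompl : ∏ i ∈ c.supportᶜ, B (rev σ x i) i = ∏ i ∈ c.supportᶜ, B (σ i) i := by
    refine Finset.prod_congr rfl fun i hi => ?_
    rw [rev_apply_of_not_mem (Finset.mem_compl.mp hi)]
  have hmain : ∏ i ∈ c.support, B (rev σ x i) i = - ∏ i ∈ c.support, B (σ i) i := by
    have e1 : ∏ i ∈ c.support, B (rev σ x i) i = ∏ i ∈ c.support, B (c⁻¹ i) i :=
      Finset.prod_congr rfl fun i hi => by rw [rev_apply_of_mem hi]
    have e2 : ∏ i ∈ c.support, B (c⁻¹ i) i = ∏ j ∈ c.support, B j (c j) := by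
      have := Equiv.Perm.prod_comp' c⁻¹ c.support (fun a b => B a b)
        (by intro a ha; simp only [Set.mem_setOf_eq] at ha
            rw [Finset.mem_coe, Equiv.Perm.mem_support]
            intro h; exact ha (by conv_lhs => rw [← h]; simp))
      simpa [Equiv.Perm.inv_def] using this
    have e3 : ∏ j ∈ c.support, B j (c j) = ∏ j ∈ c.support, -(B (c j) j) :=
      Finset.prod_congr rfl fun j _ => hskew (c j) j
    have e4 : ∏ j ∈ c.support, -(B (c j) j) = (-1 : ℤ) ^ c.support.card * ∏ j ∈ c.support, B (c j) j := by
      rw [Finset.prod_congr rfl (fun j _ => (neg_eq_neg_one_mul (B (c j) j))),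
        Finset.prod_mul_distrib, Finset.prod_const]
    have e5 : ∏ j ∈ c.support, B (c j) j = ∏ j ∈ c.support, B (σ j) j :=
      Finset.prod_congr rfl fun j hj => by rw [cycle_apply_of_mem hj]
    rw [e1, e2, e3, e4, e5, Odd.neg_one_pow hodd, neg_one_mul]
  rw [split1, split2, hcompl, hmain, neg_mul]


lemma diag_zero {B : Matrix (Fin n) (Fin n) ℤ} (hskew : ∀ i j, B j i = - B i j) (i : Fin n) :
    B i i = 0 := by
  have := hskew i i; omega

/-- the set of points lying on odd cycles -/
def oddSet (σ : Equiv.Perm (Fin n)) : Finset (Fin n) :=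
  Finset.univ.filter (fun i => Odd ((σ.cycleOf i).support.card))

/-- the involution: reverse the odd cycle through the least point on an odd cycle -/
def gInv (σ : Equiv.Perm (Fin n)) : Equiv.Perm (Fin n) :=
  if h : (oddSet σ).Nonempty then rev σ ((oddSet σ).min' h) else σ

lemma gInv_eq_rev {σ : Equiv.Perm (Fin n)} (h : (oddSet σ).Nonempty) :
    gInv σ = rev σ ((oddSet σ).min' h) := dif_pos h

lemma gInv_eq_self {σ : Equiv.Perm (Fin n)} (h : ¬ (oddSet σ).Nonempty) :
    gInv σ = σ := dif_neg h

lemma mem_oddSet_iff {σ : Equiv.Perm (Fin n)} {i : Fin n} :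
    i ∈ oddSet σ ↔ Odd ((σ.cycleOf i).support.card) := by
  unfold oddSet
  simp

lemma min'_oddSet_spec {σ : Equiv.Perm (Fin n)} (h : (oddSet σ).Nonempty) :
    Odd ((σ.cycleOf ((oddSet σ).min' h)).support.card) ∧ ((oddSet σ).min' h) ∈ σ.support := by
  have h1 : Odd ((σ.cycleOf ((oddSet σ).min' h)).support.card) :=
    mem_oddSet_iff.mp ((oddSet σ).min'_mem h)
  refine ⟨h1, ?_⟩
  exact Equiv.Perm.mem_support.mpr
    (Equiv.Perm.support_cycleOf_nonempty.mp (Finset.card_pos.mp h1.pos))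

lemma oddSet_rev {σ : Equiv.Perm (Fin n)} (h : (oddSet σ).Nonempty) :
    oddSet (rev σ ((oddSet σ).min' h)) = oddSet σ := by
  ext j
  rw [mem_oddSet_iff, mem_oddSet_iff]
  exact odd_cycle_rev_iff (min'_oddSet_spec h).2 j

lemma gInv_gInv (σ : Equiv.Perm (Fin n)) : gInv (gInv σ) = σ := by
  by_cases h : (oddSet σ).Nonempty
  · rw [gInv_eq_rev h]
    have h2 : (oddSet (rev σ ((oddSet σ).min' h))).Nonempty := by rw [oddSet_rev h]; exact h
    rw [gInv_eq_rev h2]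
    have hm : (oddSet (rev σ ((oddSet σ).min' h))).min' h2 = (oddSet σ).min' h := by
      apply le_antisymm
      · exact Finset.min'_le _ _ (by rw [oddSet_rev h]; exact Finset.min'_mem _ _)
      · exact Finset.le_min' _ _ _ (fun y hy => Finset.min'_le _ _
          (by rw [oddSet_rev h] at hy; exact hy))
    rw [hm]
    exact rev_rev (min'_oddSet_spec h).2
  · rw [gInv_eq_self h, gInv_eq_self h]

lemma gInv_ne {σ : Equiv.Perm (Fin n)} (h : (oddSet σ).Nonempty) : gInv σ ≠ σ := by
  rw [gInv_eq_rev h]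
  exact rev_ne (min'_oddSet_spec h).1

lemma term_gInv {B : Matrix (Fin n) (Fin n) ℤ} (hskew : ∀ i j, B j i = - B i j)
    {σ : Equiv.Perm (Fin n)} (h : (oddSet σ).Nonempty) :
    (Equiv.Perm.sign (gInv σ) : ℤ) * ∏ i, B (gInv σ i) i
      = -((Equiv.Perm.sign σ : ℤ) * ∏ i, B (σ i) i) := by
  rw [gInv_eq_rev h, sign_rev, prod_rev B hskew (min'_oddSet_spec h).1]
  ring

lemma term_eq_zero_of_fix {B : Matrix (Fin n) (Fin n) ℤ} (hskew : ∀ i j, B j i = - B i j)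
    {σ : Equiv.Perm (Fin n)} (hi : ∃ i, σ i = i) :
    (Equiv.Perm.sign σ : ℤ) * ∏ i, B (σ i) i = 0 := by
  obtain ⟨i, hi⟩ := hi
  have : ∏ j, B (σ j) j = 0 := Finset.prod_eq_zero (Finset.mem_univ i)
    (by rw [hi]; exact diag_zero hskew i)
  rw [this, mul_zero]

/-- good permutations: fixed-point-free with all cycles of even length -/
def goodPerms (n : ℕ) : Finset (Equiv.Perm (Fin n)) :=
  Finset.univ.filter (fun σ =>
    (∀ i, σ i ≠ i) ∧ ∀ i, ¬ Odd ((σ.cycleOf i).support.card))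

lemma mem_goodPerms_iff {σ : Equiv.Perm (Fin n)} :
    σ ∈ goodPerms n ↔ (∀ i, σ i ≠ i) ∧ ∀ i, ¬ Odd ((σ.cycleOf i).support.card) := by
  unfold goodPerms
  simp

lemma not_good_cases {σ : Equiv.Perm (Fin n)} (hσ : σ ∉ goodPerms n) :
    (∃ i, σ i = i) ∨ (oddSet σ).Nonempty := by
  by_contra hcon
  push_neg at hcon
  obtain ⟨hc1, hc2⟩ := hcon
  refine hσ (mem_goodPerms_iff.mpr ⟨fun i hi => hc1 i hi, fun i ho => ?_⟩)
  exact Finset.Nonempty.ne_empty ⟨i, mem_oddSet_iff.mpr ho⟩ hc2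

lemma gInv_mem {σ : Equiv.Perm (Fin n)} (hσ : σ ∉ goodPerms n) : gInv σ ∉ goodPerms n := by
  by_cases h : (oddSet σ).Nonempty
  · rw [gInv_eq_rev h]
    intro hmem
    obtain ⟨i, hi⟩ := id h
    have hi' : i ∈ oddSet (rev σ ((oddSet σ).min' h)) := by rw [oddSet_rev h]; exact hi
    exact (mem_goodPerms_iff.mp hmem).2 i (mem_oddSet_iff.mp hi')
  · rw [gInv_eq_self h]; exact hσ

lemma det_skew_eq (B : Matrix (Fin n) (Fin n) ℤ) (hskew : ∀ i j, B j i = - B i j) :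
    B.det = ∑ σ ∈ goodPerms n, (Equiv.Perm.sign σ : ℤ) * ∏ i, B (σ i) i := by
  have hdet : B.det = ∑ σ : Equiv.Perm (Fin n), (Equiv.Perm.sign σ : ℤ) * ∏ i, B (σ i) i := by
    rw [Matrix.det_apply]
    refine Finset.sum_congr rfl fun σ _ => ?_
    simp [Units.smul_def, zsmul_eq_mul]
  rw [hdet, ← Finset.sum_filter_add_sum_filter_not Finset.univ (fun σ => σ ∈ goodPerms n)]
  have h1 : Finset.univ.filter (fun σ => σ ∈ goodPerms n) = goodPerms n := by
    ext σ; simp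
  have h2 : ∑ σ ∈ Finset.univ.filter (fun σ => σ ∉ goodPerms n),
      (Equiv.Perm.sign σ : ℤ) * ∏ i, B (σ i) i = 0 := by
    refine Finset.sum_involution (fun σ _ => gInv σ) ?_ ?_ ?_ ?_
    · intro σ hσ
      show (Equiv.Perm.sign σ : ℤ) * ∏ i, B (σ i) i
        + (Equiv.Perm.sign (gInv σ) : ℤ) * ∏ i, B (gInv σ i) i = 0
      rw [Finset.mem_filter] at hσ
      by_cases h : (oddSet σ).Nonempty
      · rw [term_gInv hskew h]; ring
      · rcases not_good_cases hσ.2 with hfix | hne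
        · rw [gInv_eq_self h, term_eq_zero_of_fix hskew hfix]; ring
        · exact absurd hne h
    · intro σ hσ hF0
      show gInv σ ≠ σ
      rw [Finset.mem_filter] at hσ
      rcases not_good_cases hσ.2 with hfix | hne
      · exact absurd (term_eq_zero_of_fix hskew hfix) hF0
      · exact gInv_ne hne
    · intro σ hσ
      rw [Finset.mem_filter] at hσ ⊢
      exact ⟨Finset.mem_univ _, gInv_mem hσ.2⟩
    · intro σ _
      exact gInv_gInv σ
  rw [h1, h2, add_zero]

lemma exists_coloring {σ : Equiv.Perm (Fin n)} (hfpf : ∀ i, σ i ≠ i)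
    (heven : ∀ i, ¬ Odd ((σ.cycleOf i).support.card)) :
    ∃ f : Fin n → Prop, ∀ i, (f (σ i) ↔ ¬ f i) := by
  classical
  have hne : ∀ i : Fin n, ((σ.cycleOf i).support).Nonempty := by
    intro i
    exact ⟨i, mem_supp_cycle (Equiv.Perm.mem_support.mpr (hfpf i))⟩
  set b : Fin n → Fin n := fun i => ((σ.cycleOf i).support).min' (hne i) with hb
  have hbmem : ∀ i, b i ∈ (σ.cycleOf i).support := fun i => Finset.min'_mem _ _
  have hbsc : ∀ i, σ.SameCycle (b i) i := fun i =>
    ((Equiv.Perm.mem_support_cycleOf_iff.mp (hbmem i)).1).symm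
  have hex : ∀ i : Fin n, ∃ k : ℕ, (σ ^ k) (b i) = i := by
    intro i
    obtain ⟨k, _, hk⟩ := (hbsc i).exists_pow_eq'
    exact ⟨k, hk⟩
  -- all exponents k with σ^k (b i) = i have the same parity
  have hpar : ∀ (i : Fin n) (a c : ℕ), (σ ^ a) (b i) = i → (σ ^ c) (b i) = i →
      (Even a ↔ Even c) := by
    have key : ∀ (i : Fin n) (a c : ℕ), a ≤ c → (σ ^ a) (b i) = i → (σ ^ c) (b i) = i →
        (Even a ↔ Even c) := by
      intro i a c hac ha hc
      set C := σ.cycleOf i with hC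
      have hCb : σ.cycleOf (b i) = C := (hbsc i).cycleOf_eq
      have hpow : ∀ m : ℕ, (σ ^ m) (b i) = (C ^ m) (b i) := by
        intro m
        rw [← hCb]
        exact (Equiv.Perm.cycleOf_pow_apply_self σ (b i) m).symm
      have hCi : C i ≠ i := Equiv.Perm.mem_support.mp
        (mem_supp_cycle (Equiv.Perm.mem_support.mpr (hfpf i)))
      have hcyc : C.IsCycle := Equiv.Perm.isCycle_cycleOf σ (hfpf i)
      have h1 : (C ^ (c - a)) i = i := by
        have : (C ^ (c - a)) ((C ^ a) (b i)) = (C ^ c) (b i) := by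
          rw [← Equiv.Perm.mul_apply, ← pow_add, Nat.sub_add_cancel hac]
        rw [← hpow a, ← hpow c, ha, hc] at this
        exact this
      have h2 : C ^ (c - a) = 1 := (hcyc.pow_eq_one_iff' hCi).2 h1
      have h3 : (σ.cycleOf i).support.card ∣ (c - a) := by
        rw [← hcyc.orderOf]
        exact orderOf_dvd_of_pow_eq_one h2
      have h4 : Even ((σ.cycleOf i).support.card) :=
        Nat.not_odd_iff_even.mp (heven i)
      obtain ⟨t, ht⟩ := h3
      have h5 : Even (c - a) := by rw [ht]; exact h4.mul_right t
      exact iff_comm.mp ((Nat.even_sub hac).mp h5)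
    intro i a c ha hc
    rcases le_total a c with h | h
    · exact key i a c h ha hc
    · exact (key i c a h hc ha).symm
  refine ⟨fun i => Even (Nat.find (hex i)), fun i => ?_⟩
  have hbσ : b (σ i) = b i := by
    have : σ.cycleOf (σ i) = σ.cycleOf i := Equiv.Perm.cycleOf_self_apply σ i
    simp only [hb, this]
  have h1 : (σ ^ (Nat.find (hex i) + 1)) (b (σ i)) = σ i := by
    rw [hbσ, pow_succ', Equiv.Perm.mul_apply, Nat.find_spec (hex i)]
  have h2 := hpar (σ i) (Nat.find (hex (σ i))) (Nat.find (hex i) + 1)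
    (Nat.find_spec (hex (σ i))) h1
  show Even (Nat.find (hex (σ i))) ↔ ¬ Even (Nat.find (hex i))
  rw [h2, Nat.even_add_one]

/-- the sorted edge pair of `i` under `σ` -/
def q (σ : Equiv.Perm (Fin n)) (i : Fin n) : Fin n × Fin n :=
  if i < σ i then (i, σ i) else (σ i, i)

lemma q_fst_lt_snd {σ : Equiv.Perm (Fin n)} (hfpf : ∀ i, σ i ≠ i) (i : Fin n) :
    (q σ i).1 < (q σ i).2 := by
  unfold q
  rcases lt_trichotomy i (σ i) with h | h | h
  · rw [if_pos h]; exact h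
  · exact absurd h.symm (hfpf i)
  · rw [if_neg (not_lt.mpr h.le)]; exact h

lemma q_vertices {σ : Equiv.Perm (Fin n)} (i : Fin n) :
    ((q σ i).1 = i ∧ (q σ i).2 = σ i) ∨ ((q σ i).1 = σ i ∧ (q σ i).2 = i) := by
  unfold q
  split_ifs <;> simp

lemma matching_of_coloring (G : SimpleGraph (Fin n)) [DecidableRel G.Adj]
    (w : Fin n → Fin n → ℕ) (hwsym : ∀ i j, w i j = w j i)
    {σ : Equiv.Perm (Fin n)} (hfpf : ∀ i, σ i ≠ i)
    (hadj : ∀ i, G.Adj i (σ i)) {f : Fin n → Prop} [DecidablePred f]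
    (hf : ∀ i, f (σ i) ↔ ¬ f i) :
    IsPerfectMatchingF G ((Finset.univ.filter f).image (q σ)) ∧
      ∑ p ∈ (Finset.univ.filter f).image (q σ), w p.1 p.2
        = ∑ i ∈ Finset.univ.filter f, w i (σ i) := by
  have hmemq : ∀ p ∈ (Finset.univ.filter f).image (q σ), ∃ i, f i ∧ q σ i = p := by
    intro p hp
    obtain ⟨i, hi, hqi⟩ := Finset.mem_image.mp hp
    exact ⟨i, (Finset.mem_filter.mp hi).2, hqi⟩
  have hdisj : ∀ i j, f i → f j → q σ i ≠ q σ j →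
      i ≠ j ∧ i ≠ σ j ∧ σ i ≠ j ∧ σ i ≠ σ j := by
    intro i j hfi hfj hne
    refine ⟨fun h => hne (by rw [h]), fun h => ?_, fun h => ?_, fun h => hne (by
      rw [σ.injective (h : σ i = σ j)])⟩
    · rw [h] at hfi; exact (hf j).mp hfi hfj
    · rw [← h] at hfj; exact (hf i).mp hfj hfi
  constructor
  · constructor
    · constructor
      · intro p hp
        obtain ⟨i, _, rfl⟩ := hmemq p hp
        refine ⟨q_fst_lt_snd hfpf i, ?_⟩
        rcases q_vertices (σ := σ) i with ⟨h1, h2⟩ | ⟨h1, h2⟩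
        · rw [h1, h2]; exact hadj i
        · rw [h1, h2]; exact (hadj i).symm
      · intro p hp p' hp' hne
        obtain ⟨i, hfi, rfl⟩ := hmemq p hp
        obtain ⟨j, hfj, rfl⟩ := hmemq p' hp'
        obtain ⟨d1, d2, d3, d4⟩ := hdisj i j hfi hfj hne
        rcases q_vertices (σ := σ) i with ⟨h1, h2⟩ | ⟨h1, h2⟩ <;>
          rcases q_vertices (σ := σ) j with ⟨g1, g2⟩ | ⟨g1, g2⟩ <;>
          rw [h1, h2, g1, g2] <;>
          exact ⟨by assumption, by assumption, by assumption, by assumption⟩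
    · intro v
      by_cases hv : f v
      · refine ⟨q σ v, Finset.mem_image.mpr ⟨v, Finset.mem_filter.mpr
          ⟨Finset.mem_univ _, hv⟩, rfl⟩, ?_⟩
        rcases q_vertices (σ := σ) v with ⟨h1, _⟩ | ⟨_, h2⟩
        · exact Or.inl h1.symm
        · exact Or.inr h2.symm
      · have hv' : f (σ⁻¹ v) := by
          by_contra hcon
          have := hf (σ⁻¹ v)
          rw [← Equiv.Perm.mul_apply, mul_inv_cancel, Equiv.Perm.one_apply] at this
          exact hv (this.mpr hcon)
        refine ⟨q σ (σ⁻¹ v), Finset.mem_image.mpr ⟨σ⁻¹ v, Finset.mem_filter.mpr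
          ⟨Finset.mem_univ _, hv'⟩, rfl⟩, ?_⟩
        rcases q_vertices (σ := σ) (σ⁻¹ v) with ⟨_, h2⟩ | ⟨h1, _⟩
        · rw [← Equiv.Perm.mul_apply, mul_inv_cancel, Equiv.Perm.one_apply] at h2; exact Or.inr h2.symm
        · rw [← Equiv.Perm.mul_apply, mul_inv_cancel, Equiv.Perm.one_apply] at h1; exact Or.inl h1.symm
  · rw [Finset.sum_image ?inj]
    case inj =>
      intro i hi j hj hqe
      by_contra hne
      have hfi := (Finset.mem_filter.mp hi).2
      have hfj := (Finset.mem_filter.mp hj).2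
      rcases q_vertices (σ := σ) i with ⟨h1, h2⟩ | ⟨h1, h2⟩ <;>
        rcases q_vertices (σ := σ) j with ⟨g1, g2⟩ | ⟨g1, g2⟩
      · exact hne (by rw [← h1, ← g1, hqe])
      · exact (hf j).mp (by rw [← g1, ← hqe, h1]; exact hfi) hfj
      · exact (hf i).mp (by rw [← h1, hqe, g1]; exact hfj) hfi
      · exact hne (σ.injective (by rw [← h1, ← g1, hqe]))
    refine Finset.sum_congr rfl fun i _ => ?_
    rcases q_vertices (σ := σ) i with ⟨h1, h2⟩ | ⟨h1, h2⟩
    · rw [h1, h2]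
    · rw [h1, h2]; exact hwsym (σ i) i

lemma pair_unique {G : SimpleGraph (Fin n)} {s : Finset (Fin n × Fin n)}
    (hpm : IsPerfectMatchingF G s) {p r : Fin n × Fin n} (hp : p ∈ s) (hr : r ∈ s)
    {v : Fin n} (hvp : v = p.1 ∨ v = p.2) (hvr : v = r.1 ∨ v = r.2) : p = r := by
  by_contra hne
  obtain ⟨d1, d2, d3, d4⟩ := hpm.1.2 p hp r hr hne
  rcases hvp with rfl | h <;> rcases hvr with h' | h' <;> simp_all

lemma exists_matching_perm {G : SimpleGraph (Fin n)} {s : Finset (Fin n × Fin n)}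
    (hpm : IsPerfectMatchingF G s) :
    ∃ σ₀ : Equiv.Perm (Fin n), (∀ p ∈ s, σ₀ p.1 = p.2 ∧ σ₀ p.2 = p.1) ∧
      σ₀ ∈ goodPerms n := by
  classical
  have hne : ∀ p ∈ s, p.1 ≠ p.2 := fun p hp => ne_of_lt (hpm.1.1 p hp).1
  set pf : Fin n → Fin n := fun v =>
    if v = (hpm.2 v).choose.1 then (hpm.2 v).choose.2 else (hpm.2 v).choose.1 with hpf
  have pf_pair : ∀ v, ∃ p ∈ s, (v = p.1 ∧ pf v = p.2) ∨ (v = p.2 ∧ pf v = p.1) := by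
    intro v
    obtain ⟨hps, hv⟩ := (hpm.2 v).choose_spec
    refine ⟨(hpm.2 v).choose, hps, ?_⟩
    rcases hv with h | h
    · exact Or.inl ⟨h, by rw [hpf]; simp only [if_pos h]⟩
    · have hv1 : v ≠ (hpm.2 v).choose.1 := fun hc =>
        hne _ hps (hc.symm.trans h)
      exact Or.inr ⟨h, by rw [hpf]; simp only [if_neg hv1]⟩
  have pf_spec : ∀ p ∈ s, pf p.1 = p.2 ∧ pf p.2 = p.1 := by
    intro p hp
    constructor
    · obtain ⟨r, hr, hor⟩ := pf_pair p.1
      have : p = r := pair_unique hpm hp hr (Or.inl rfl)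
        (by rcases hor with ⟨h, _⟩ | ⟨h, _⟩ <;> [exact Or.inl h; exact Or.inr h])
      rcases hor with ⟨h1, h2⟩ | ⟨h1, h2⟩
      · rw [h2, ← this]
      · exact absurd (this ▸ h1) (hne p hp)
    · obtain ⟨r, hr, hor⟩ := pf_pair p.2
      have : p = r := pair_unique hpm hp hr (Or.inr rfl)
        (by rcases hor with ⟨h, _⟩ | ⟨h, _⟩ <;> [exact Or.inl h; exact Or.inr h])
      rcases hor with ⟨h1, h2⟩ | ⟨h1, h2⟩
      · exact absurd (this ▸ h1) (Ne.symm (hne p hp))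
      · rw [h2, ← this]
  have hinv : Function.Involutive pf := by
    intro v
    obtain ⟨p, hp, hor⟩ := pf_pair v
    rcases hor with ⟨h1, h2⟩ | ⟨h1, h2⟩
    · rw [h2, (pf_spec p hp).2, ← h1]
    · rw [h2, (pf_spec p hp).1, ← h1]
  refine ⟨(Function.Involutive.toPerm pf hinv), ?_, ?_⟩
  · intro p hp
    exact pf_spec p hp
  · rw [mem_goodPerms_iff]
    have hfpf : ∀ v, (Function.Involutive.toPerm pf hinv) v ≠ v := by
      intro v
      obtain ⟨p, hp, hor⟩ := pf_pair v
      show pf v ≠ v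
      rcases hor with ⟨h1, h2⟩ | ⟨h1, h2⟩
      · rw [h2, h1]; exact Ne.symm (hne p hp)
      · rw [h2, h1]; exact hne p hp
    refine ⟨hfpf, fun v => ?_⟩
    have hsw : Equiv.swap v ((Function.Involutive.toPerm pf hinv) v) ∈ (Function.Involutive.toPerm pf hinv).cycleFactorsFinset := by
      rw [Equiv.Perm.mem_cycleFactorsFinset_iff]
      refine ⟨Equiv.Perm.isCycle_swap (Ne.symm (hfpf v)), fun a ha => ?_⟩
      rw [Equiv.Perm.support_swap (Ne.symm (hfpf v))] at ha
      rcases Finset.mem_insert.mp ha with rfl | ha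
      · rw [Equiv.swap_apply_left]
      · rw [Finset.mem_singleton.mp ha, Equiv.swap_apply_right]
        exact (hinv v).symm
    have hv : v ∈ (Equiv.swap v ((Function.Involutive.toPerm pf hinv) v)).support := by
      rw [Equiv.Perm.support_swap (Ne.symm (hfpf v))]
      exact Finset.mem_insert_self _ _
    rw [← Equiv.Perm.cycle_is_cycleOf hv hsw,
      Equiv.Perm.card_support_swap (Ne.symm (hfpf v))]
    norm_num

lemma prod_split {G : SimpleGraph (Fin n)} {s : Finset (Fin n × Fin n)}
    (hpm : IsPerfectMatchingF G s) (g : Fin n → ℤ) :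
    ∏ i, g i = ∏ p ∈ s, (g p.1 * g p.2) := by
  classical
  have hne : ∀ p ∈ s, p.1 ≠ p.2 := fun p hp => ne_of_lt (hpm.1.1 p hp).1
  have huniv : (Finset.univ : Finset (Fin n)) = s.biUnion (fun p => {p.1, p.2}) := by
    ext v
    simp only [Finset.mem_univ, true_iff, Finset.mem_biUnion]
    obtain ⟨p, hp, hv⟩ := hpm.2 v
    exact ⟨p, hp, by rcases hv with rfl | rfl <;> simp⟩
  rw [huniv, Finset.prod_biUnion]
  · refine Finset.prod_congr rfl fun p hp => ?_
    rw [Finset.prod_pair (hne p hp)]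
  · intro p hp r hr hpr
    simp only [Function.onFun]
    rw [Finset.disjoint_left]
    intro a hap har
    obtain ⟨d1, d2, d3, d4⟩ := hpm.1.2 p hp r hr hpr
    simp only [Finset.mem_insert, Finset.mem_singleton] at hap har
    rcases hap with rfl | rfl <;> rcases har with h | h <;> simp_all

end MVV

/-- Mulmuley–Vazirani–Vazirani: if `G` has a unique minimum-weight perfect matching with
respect to positive integer edge weights `w`, then the integer matrix obtained from the
Tutte matrix by substituting `x_{ij} := 2^{w(i,j)}` has nonzero determinant. -/
theorem stmt_17 {n : ℕ} (G : SimpleGraph (Fin n)) [DecidableRel G.Adj]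
    (w : Fin n → Fin n → ℕ)
    (hwsym : ∀ i j, w i j = w j i)
    (hwpos : ∀ i j, G.Adj i j → 1 ≤ w i j)
    (huniq : ∃! s : Finset (Fin n × Fin n), IsPerfectMatchingF G s ∧
      ∀ t : Finset (Fin n × Fin n), IsPerfectMatchingF G t →
        ∑ p ∈ s, w p.1 p.2 ≤ ∑ p ∈ t, w p.1 p.2)
    (B : Matrix (Fin n) (Fin n) ℤ)
    (hB : B = Matrix.of fun i j =>
      if G.Adj i j then (if i < j then 2 ^ (w i j) else -(2 ^ (w j i))) else 0) :
    B.det ≠ 0 := by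
  classical
  obtain ⟨s₀, ⟨hpm, hmin⟩, huni⟩ := huniq
  set W := ∑ p ∈ s₀, w p.1 p.2 with hW
  -- basic entry facts
  have hBe : ∀ i j, B i j =
      if G.Adj i j then (if i < j then (2:ℤ) ^ (w i j) else -(2 ^ (w j i))) else 0 := by
    intro i j; rw [hB]; rfl
  have hskew : ∀ i j, B j i = - B i j := by
    intro i j
    rw [hBe, hBe]
    by_cases hadj : G.Adj i j
    · rw [if_pos hadj, if_pos hadj.symm]
      rcases lt_trichotomy i j with h | h | h
      · rw [if_pos h, if_neg (not_lt.mpr h.le)]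
      · exact absurd h (G.ne_of_adj hadj)
      · rw [if_pos h, if_neg (not_lt.mpr h.le)]
        ring
    · rw [if_neg hadj, if_neg (fun h => hadj h.symm), neg_zero]
  have hB0 : ∀ i j, ¬ G.Adj i j → B i j = 0 := by
    intro i j h; rw [hBe, if_neg h]
  have hBdvd : ∀ i j, G.Adj i j → (2:ℤ) ^ (w i j) ∣ B i j := by
    intro i j h
    rw [hBe, if_pos h]
    split_ifs with hlt
    · exact dvd_refl _
    · rw [hwsym j i]
      exact dvd_neg.mpr (dvd_refl _)
  obtain ⟨σ₀, hσ₀maps, hσ₀good⟩ := MVV.exists_matching_perm hpm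
  have hσ₀spec := MVV.mem_goodPerms_iff.mp hσ₀good
  -- the minimum term
  have hterm0 : ∃ ε : ℤ, (ε = 1 ∨ ε = -1) ∧
      (Equiv.Perm.sign σ₀ : ℤ) * ∏ i, B (σ₀ i) i = ε * 2 ^ (2 * W) := by
    have hp1 : ∏ i, B (σ₀ i) i = ∏ p ∈ s₀, (B (σ₀ p.1) p.1 * B (σ₀ p.2) p.2) :=
      MVV.prod_split hpm _
    have hp2 : ∏ p ∈ s₀, (B (σ₀ p.1) p.1 * B (σ₀ p.2) p.2)
        = ∏ p ∈ s₀, -((2:ℤ) ^ (2 * w p.1 p.2)) := by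
      refine Finset.prod_congr rfl fun p hp => ?_
      obtain ⟨hlt, hadj⟩ := hpm.1.1 p hp
      obtain ⟨hm1, hm2⟩ := hσ₀maps p hp
      rw [hm1, hm2]
      have e1 : B p.1 p.2 = 2 ^ (w p.1 p.2) := by
        rw [hBe, if_pos hadj, if_pos hlt]
      have e2 : B p.2 p.1 = -(2 ^ (w p.1 p.2)) := by
        rw [hBe, if_pos hadj.symm, if_neg (not_lt.mpr hlt.le)]
      rw [e1, e2, two_mul, pow_add]
      ring
    have hp3 : ∏ p ∈ s₀, -((2:ℤ) ^ (2 * w p.1 p.2))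
        = (-1) ^ s₀.card * 2 ^ (2 * W) := by
      rw [Finset.prod_congr rfl (fun p _ => neg_eq_neg_one_mul ((2:ℤ) ^ (2 * w p.1 p.2))),
        Finset.prod_mul_distrib, Finset.prod_const, Finset.prod_pow_eq_pow_sum, hW,
        Finset.mul_sum]
    refine ⟨(Equiv.Perm.sign σ₀ : ℤ) * (-1) ^ s₀.card, ?_, ?_⟩
    · rcases Int.units_eq_one_or (Equiv.Perm.sign σ₀) with h | h <;>
        rcases Nat.even_or_odd s₀.card with hc | hc <;>
        simp [h, hc.neg_one_pow]
    · rw [hp1, hp2, hp3]; ring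
  -- all other terms are divisible by 2^(2W+1)
  have hrest : ∀ σ ∈ MVV.goodPerms n, σ ≠ σ₀ →
      (2:ℤ) ^ (2 * W + 1) ∣ (Equiv.Perm.sign σ : ℤ) * ∏ i, B (σ i) i := by
    intro σ hσ hneσ
    obtain ⟨hfpf, heven⟩ := MVV.mem_goodPerms_iff.mp hσ
    by_cases hadj : ∀ i, G.Adj i (σ i)
    · -- all edges present: decompose into two matchings
      obtain ⟨f, hf⟩ := MVV.exists_coloring hfpf heven
      have hf' : ∀ i, (¬ f (σ i)) ↔ ¬ ¬ f i := fun i => not_congr (hf i)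
      obtain ⟨hpm1, hsum1⟩ := MVV.matching_of_coloring G w hwsym hfpf hadj hf
      obtain ⟨hpm2, hsum2⟩ := MVV.matching_of_coloring G w hwsym hfpf hadj
        (f := fun i => ¬ f i) hf'
      set M1 := (Finset.univ.filter f).image (MVV.q σ) with hM1
      set M2 := (Finset.univ.filter (fun i => ¬ f i)).image (MVV.q σ) with hM2
      have hsplit : ∑ i ∈ Finset.univ.filter f, w i (σ i)
          + ∑ i ∈ Finset.univ.filter (fun i => ¬ f i), w i (σ i)
          = ∑ i, w i (σ i) :=
        Finset.sum_filter_add_sum_filter_not _ _ _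
      have hge1 : W ≤ ∑ p ∈ M1, w p.1 p.2 := hmin M1 hpm1
      have hge2 : W ≤ ∑ p ∈ M2, w p.1 p.2 := hmin M2 hpm2
      have hm : 2 * W + 1 ≤ ∑ i, w i (σ i) := by
        rcases Nat.lt_or_ge (2 * W) (∑ i, w i (σ i)) with h | h
        · omega
        · -- both matchings are minimum, contradiction with σ ≠ σ₀
          exfalso
          have h1 : ∑ p ∈ M1, w p.1 p.2 = W := by omega
          have h2 : ∑ p ∈ M2, w p.1 p.2 = W := by omega
          have hM1s : M1 = s₀ := huni M1 ⟨hpm1, fun t ht => h1 ▸ (h1.symm ▸ hmin t ht)⟩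
          have hM2s : M2 = s₀ := huni M2 ⟨hpm2, fun t ht => h2 ▸ (h2.symm ▸ hmin t ht)⟩
          refine hneσ (Equiv.ext fun i => ?_)
          have hqin : MVV.q σ i ∈ s₀ := by
            by_cases hfi : f i
            · rw [← hM1s, hM1]
              exact Finset.mem_image.mpr ⟨i, Finset.mem_filter.mpr ⟨Finset.mem_univ _, hfi⟩, rfl⟩
            · rw [← hM2s, hM2]
              exact Finset.mem_image.mpr ⟨i, Finset.mem_filter.mpr ⟨Finset.mem_univ _, hfi⟩, rfl⟩
          obtain ⟨e1, e2⟩ := hσ₀maps _ hqin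
          rcases MVV.q_vertices (σ := σ) i with ⟨g1, g2⟩ | ⟨g1, g2⟩
          · rw [g1, g2] at e1; exact e1.symm
          · rw [g1, g2] at e2; exact e2.symm
      have hdvdprod : (2:ℤ) ^ (∑ i, w i (σ i)) ∣ ∏ i, B (σ i) i := by
        rw [← Finset.prod_pow_eq_pow_sum]
        refine Finset.prod_dvd_prod_of_dvd _ _ (fun i _ => ?_)
        have := hBdvd (σ i) i (hadj i).symm
        rwa [hwsym (σ i) i] at this
      exact Dvd.dvd.mul_left ((pow_dvd_pow 2 hm).trans hdvdprod) _
    · -- some non-edge: the term vanishes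
      push_neg at hadj
      obtain ⟨i, hi⟩ := hadj
      have : ∏ j, B (σ j) j = 0 := Finset.prod_eq_zero (Finset.mem_univ i)
        (hB0 _ _ (fun h => hi h.symm))
      rw [this, mul_zero]
      exact dvd_zero _
  -- assemble
  rw [MVV.det_skew_eq B hskew]
  obtain ⟨ε, hε, hT0⟩ := hterm0
  rw [← Finset.add_sum_erase _ _ hσ₀good, hT0]
  have hdvdR : (2:ℤ) ^ (2 * W + 1) ∣
      ∑ σ ∈ (MVV.goodPerms n).erase σ₀, (Equiv.Perm.sign σ : ℤ) * ∏ i, B (σ i) i :=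
    Finset.dvd_sum fun σ hσ =>
      hrest σ (Finset.mem_of_mem_erase hσ) (Finset.ne_of_mem_erase hσ)
  intro hdet
  have hd2 : (2:ℤ) ^ (2 * W + 1) ∣ ε * 2 ^ (2 * W) := by
    have : ε * 2 ^ (2 * W) = -(∑ σ ∈ (MVV.goodPerms n).erase σ₀,
        (Equiv.Perm.sign σ : ℤ) * ∏ i, B (σ i) i) := by linarith [hdet]
    rw [this]
    exact dvd_neg.mpr hdvdR
  have hd3 : (2:ℤ) ^ (2 * W + 1) ∣ 2 ^ (2 * W) := by
    rcases hε with rfl | rfl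
    · rwa [one_mul] at hd2
    · rw [neg_one_mul] at hd2
      exact (dvd_neg.mp hd2)
  have := Int.le_of_dvd (by positivity) hd3
  have h2 : (2:ℤ) ^ (2 * W + 1) = 2 * 2 ^ (2 * W) := by ring
  have h3 : (0:ℤ) < 2 ^ (2 * W) := by positivity
  omega
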